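/- (Third version of Peano's Theorem: existence between lower and upper solutions.) Let t0, y0 ∈ ℝ, a > 0, I = [t0, t0+a], and let f : I × ℝ → ℝ be continuous. Suppose α : I → ℝ is a lower solution and β : I → ℝ is an upper solution of the problem y' = f(t,y) on I, y(t0) = y0, and suppose α(t) ≤ β(t) for all t ∈ I. Then there exists a differentiable function φ : I → ℝ with φ(t0) = y0, φ'(t) = f(t, φ(t)) for all t ∈ I, and α(t) ≤ φ(t) ≤ β(t) for all t ∈ I. -/

import Mathlib

open Set Topology Filter MeasureTheory intervalIntegral

noncomputable def mcs (g : ℝ → ℝ → ℝ) (n : ℕ) (t y : ℝ) : ℝ :=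
  ⨅ z : ℝ, (g t z + n * |y - z|)

section mcsLemmas

variable {g : ℝ → ℝ → ℝ} {M : ℝ} (hb : ∀ t y, |g t y| ≤ M)

include hb

lemma mcs_bddBelow (n : ℕ) (t y : ℝ) :
    BddBelow (range fun z : ℝ => g t z + n * |y - z|) := by
  refine ⟨-M, ?_⟩
  rintro x ⟨z, rfl⟩
  have h1 : -M ≤ g t z := neg_le_of_abs_le (hb t z)
  have h2 : (0:ℝ) ≤ (n:ℝ) * |y - z| := by positivity
  show -M ≤ g t z + (n:ℝ) * |y - z|
  linarith

lemma mcs_le_self (n : ℕ) (t y : ℝ) : mcs g n t y ≤ g t y := by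
  have := ciInf_le (mcs_bddBelow hb n t y) y
  simpa [mcs] using this

lemma neg_le_mcs (n : ℕ) (t y : ℝ) : -M ≤ mcs g n t y := by
  refine le_ciInf fun z => ?_
  have h1 : -M ≤ g t z := neg_le_of_abs_le (hb t z)
  have h2 : (0:ℝ) ≤ n * |y - z| := by positivity
  linarith

lemma abs_mcs_le (n : ℕ) (t y : ℝ) : |mcs g n t y| ≤ M :=
  abs_le.2 ⟨neg_le_mcs hb n t y, (mcs_le_self hb n t y).trans ((abs_le.1 (hb t y)).2)⟩

lemma mcs_mono {n m : ℕ} (hnm : n ≤ m) (t y : ℝ) : mcs g n t y ≤ mcs g m t y := by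
  refine le_ciInf fun z => ?_
  refine (ciInf_le (mcs_bddBelow hb n t y) z).trans ?_
  have : (n:ℝ) * |y - z| ≤ (m:ℝ) * |y - z| := by
    apply mul_le_mul_of_nonneg_right (by exact_mod_cast hnm) (abs_nonneg _)
  linarith

lemma mcs_lip (n : ℕ) (t y y' : ℝ) : mcs g n t y ≤ mcs g n t y' + n * |y - y'| := by
  rw [← sub_le_iff_le_add]
  refine le_ciInf fun z => ?_
  rw [sub_le_iff_le_add]
  refine (ciInf_le (mcs_bddBelow hb n t y) z).trans ?_
  have h1 : |y - z| ≤ |y' - z| + |y - y'| := by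
    have := abs_sub_abs_le_abs_sub (y - z) (y' - z)
    have h2 := abs_sub (y - z) (y' - z)
    calc |y - z| = |(y' - z) + (y - y')| := by ring_nf
      _ ≤ |y' - z| + |y - y'| := abs_add_le _ _
  nlinarith [abs_nonneg (y - y'), Nat.cast_nonneg (α := ℝ) n]

lemma abs_mcs_sub_le (n : ℕ) (t y y' : ℝ) :
    |mcs g n t y - mcs g n t y'| ≤ n * |y - y'| := by
  rw [abs_sub_le_iff]
  constructor
  · have := mcs_lip hb n t y y'; linarith
  · have := mcs_lip hb n t y' y
    rw [abs_sub_comm] at this; linarith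

lemma mcs_t_mono {n : ℕ} {t t' : ℝ} {ε : ℝ} (hε : ∀ z, |g t z - g t' z| ≤ ε) (y : ℝ) :
    mcs g n t y ≤ mcs g n t' y + ε := by
  rw [← sub_le_iff_le_add]
  refine le_ciInf fun z => ?_
  rw [sub_le_iff_le_add]
  refine (ciInf_le (mcs_bddBelow hb n t y) z).trans ?_
  have := abs_le.1 (hε z)
  linarith

lemma abs_mcs_t_le {n : ℕ} {t t' : ℝ} {ε : ℝ} (hε : ∀ z, |g t z - g t' z| ≤ ε) (y : ℝ) :
    |mcs g n t y - mcs g n t' y| ≤ ε := by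
  rw [abs_sub_le_iff]
  refine ⟨by have := mcs_t_mono hb (n := n) hε y; linarith, ?_⟩
  have hε' : ∀ z, |g t' z - g t z| ≤ ε := fun z => (abs_sub_comm (g t z) (g t' z) ▸ hε z)
  have := mcs_t_mono hb (n := n) hε' y; linarith

lemma mcs_ge {n : ℕ} {t y : ℝ} {ε δ : ℝ} (hε : 0 ≤ ε) (hδ : 0 < δ)
    (hy : ∀ z, |y - z| ≤ δ → |g t y - g t z| ≤ ε) (hn : 2 * M ≤ n * δ) :
    g t y - ε ≤ mcs g n t y := by
  refine le_ciInf fun z => ?_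
  rcases le_or_gt |y - z| δ with hle | hlt
  · have := (abs_le.1 (hy z hle)).2
    have h2 : (0:ℝ) ≤ n * |y - z| := by positivity
    linarith
  · have h1 : -M ≤ g t z := neg_le_of_abs_le (hb t z)
    have h2 : g t y ≤ M := (abs_le.1 (hb t y)).2
    have h3 : (n:ℝ) * δ ≤ n * |y - z| :=
      mul_le_mul_of_nonneg_left hlt.le (Nat.cast_nonneg _)
    linarith

end mcsLemmas

attribute [irreducible] mcs

/-- Core comparison lemma: if `h t0 ≤ 0` and `h' ≤ 0` wherever `h ≥ 0`, then `h ≤ 0`. -/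
lemma aux_comp {t0 T : ℝ} {h h' : ℝ → ℝ}
    (hd : ∀ t ∈ Icc t0 T, HasDerivWithinAt h (h' t) (Icc t0 T) t)
    (h0 : h t0 ≤ 0)
    (hcond : ∀ t ∈ Icc t0 T, 0 ≤ h t → h' t ≤ 0) :
    ∀ t ∈ Icc t0 T, h t ≤ 0 := by
  intro t1 ht1
  by_contra hpos
  push_neg at hpos
  have hcont : ContinuousOn h (Icc t0 T) := fun s hs => (hd s hs).continuousWithinAt
  have hsub : Icc t0 t1 ⊆ Icc t0 T := Icc_subset_Icc le_rfl ht1.2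
  set S := Icc t0 t1 ∩ h ⁻¹' (Iic 0) with hSdef
  have hSne : t0 ∈ S := ⟨⟨le_rfl, ht1.1⟩, h0⟩
  have hScl : IsClosed S :=
    (hcont.mono hsub).preimage_isClosed_of_isClosed isClosed_Icc isClosed_Iic
  have hScomp : IsCompact S :=
    isCompact_Icc.of_isClosed_subset hScl (fun x hx => hx.1)
  set t2 := sSup S with ht2def
  have ht2S : t2 ∈ S := hScomp.sSup_mem ⟨t0, hSne⟩
  have ht2I : t2 ∈ Icc t0 t1 := ht2S.1
  have ht2le : h t2 ≤ 0 := ht2S.2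
  have ht2lt : t2 < t1 := ht2I.2.lt_of_ne (fun he => absurd (he ▸ ht2le) (not_le.2 hpos))
  have hIocpos : ∀ s ∈ Ioc t2 t1, 0 < h s := by
    intro s hs
    by_contra hns
    push_neg at hns
    have hsS : s ∈ S := ⟨⟨ht2I.1.trans hs.1.le, hs.2⟩, hns⟩
    exact absurd (le_csSup hScomp.bddAbove hsS) (not_le.2 hs.1)
  have hIocsub : Ioc t2 t1 ⊆ Icc t0 T :=
    fun s hs => ⟨ht2I.1.trans hs.1.le, hs.2.trans ht1.2⟩
  have ht2mem : t2 ∈ Icc t0 T := hsub ht2I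
  -- h t2 = 0
  have ht2eq : h t2 = 0 := by
    refine le_antisymm ht2le ?_
    have hne : (𝓝[Ioc t2 t1] t2).NeBot := by
      rw [nhdsWithin_Ioc_eq_nhdsGT ht2lt]
      infer_instance
    have htend : Filter.Tendsto h (𝓝[Ioc t2 t1] t2) (𝓝 (h t2)) :=
      (hcont t2 ht2mem).mono_left (nhdsWithin_mono _ hIocsub)
    exact ge_of_tendsto htend (Filter.eventually_of_mem self_mem_nhdsWithin
      fun s hs => (hIocpos s hs).le)
  -- antitone on Icc t2 t1
  have hanti : AntitoneOn h (Icc t2 t1) := by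
    refine antitoneOn_of_deriv_nonpos (convex_Icc _ _)
      (hcont.mono (Icc_subset_Icc ht2I.1 ht1.2)) ?_ ?_
    · intro x hx
      rw [interior_Icc] at hx
      have hxmem : x ∈ Icc t0 T := hIocsub ⟨hx.1, hx.2.le⟩
      have : HasDerivAt h (h' x) x :=
        (hd x hxmem).hasDerivAt (Icc_mem_nhds (ht2I.1.trans_lt hx.1) (hx.2.trans_le ht1.2))
      exact this.differentiableAt.differentiableWithinAt
    · intro x hx
      rw [interior_Icc] at hx
      have hxmem : x ∈ Icc t0 T := hIocsub ⟨hx.1, hx.2.le⟩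
      have hdx : HasDerivAt h (h' x) x :=
        (hd x hxmem).hasDerivAt (Icc_mem_nhds (ht2I.1.trans_lt hx.1) (hx.2.trans_le ht1.2))
      rw [hdx.deriv]
      exact hcond x hxmem (hIocpos x ⟨hx.1, hx.2.le⟩).le
  have := hanti (left_mem_Icc.2 ht2lt.le) (right_mem_Icc.2 ht2lt.le) ht2lt.le
  rw [ht2eq] at this
  exact absurd (hpos.trans_le this) (lt_irrefl 0)

lemma peano_aux (t0 y0 a M : ℝ) (ha : 0 < a) (hM : 0 ≤ M) (g : ℝ → ℝ → ℝ)
    (hgb : ∀ t y, |g t y| ≤ M)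
    (hUC : ∀ ε > 0, ∃ δ > 0, ∀ t t' y y', |t - t'| ≤ δ → |y - y'| ≤ δ →
      |g t y - g t' y'| ≤ ε) :
    ∃ φ : ℝ → ℝ, φ t0 = y0 ∧ ∀ t ∈ Icc t0 (t0 + a),
      HasDerivWithinAt φ (g t (φ t)) (Icc t0 (t0 + a)) t := by
  have haa : t0 ≤ t0 + a := by linarith
  set I : Set ℝ := Icc t0 (t0 + a) with hIdef
  -- uniform continuity in y only
  have hUCy : ∀ ε > 0, ∃ δ > 0, ∀ t y y', |y - y'| ≤ δ → |g t y - g t y'| ≤ ε := by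
    intro ε hε
    obtain ⟨δ, hδ, hδ'⟩ := hUC ε hε
    exact ⟨δ, hδ, fun t y y' h => hδ' t t y y' (by simp [hδ.le]) h⟩
  -- joint continuity of each mcs g n
  have hgnc : ∀ n : ℕ, Continuous fun p : ℝ × ℝ => mcs g n p.1 p.2 := by
    intro n
    rw [Metric.continuous_iff]
    intro b ε hε
    obtain ⟨δ1, hδ1, hδ1'⟩ := hUC (ε/3) (by linarith)
    have hδ2 : (0:ℝ) < ε / (3 * (n + 1)) := by positivity
    refine ⟨min δ1 (ε / (3 * (n + 1))), lt_min hδ1 hδ2, fun p hp => ?_⟩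
    have h1 : dist p.1 b.1 ≤ min δ1 (ε / (3 * (n + 1))) :=
      le_trans (le_max_left _ _) (by rw [← Prod.dist_eq]; exact hp.le)
    have h2 : dist p.2 b.2 ≤ min δ1 (ε / (3 * (n + 1))) :=
      le_trans (le_max_right _ _) (by rw [← Prod.dist_eq]; exact hp.le)
    rw [Real.dist_eq] at h1 h2 ⊢
    have e1 : |mcs g n p.1 p.2 - mcs g n b.1 p.2| ≤ ε/3 := by
      refine abs_mcs_t_le hgb (fun z => ?_) _
      exact hδ1' _ _ z z (h1.trans (min_le_left _ _)) (by simp [hδ1.le])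
    have e2 : |mcs g n b.1 p.2 - mcs g n b.1 b.2| ≤ (n:ℝ) * |p.2 - b.2| :=
      abs_mcs_sub_le hgb n _ _ _
    have e3 : (n:ℝ) * |p.2 - b.2| ≤ ε/3 := by
      have h2' : |p.2 - b.2| ≤ ε / (3 * (n + 1)) := h2.trans (min_le_right _ _)
      have hn1 : (0:ℝ) < (n:ℝ) + 1 := by positivity
      have heq : ((n:ℝ)+1) * (ε / (3 * ((n:ℝ) + 1))) = ε/3 := by
        field_simp
      calc (n:ℝ) * |p.2 - b.2| ≤ ((n:ℝ)+1) * (ε / (3 * (n + 1))) := by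
            apply mul_le_mul (by linarith) h2' (abs_nonneg _) (by positivity)
        _ = ε/3 := heq
    calc |mcs g n p.1 p.2 - mcs g n b.1 b.2|
        ≤ |mcs g n p.1 p.2 - mcs g n b.1 p.2| + |mcs g n b.1 p.2 - mcs g n b.1 b.2| :=
          abs_sub_le _ _ _
      _ ≤ ε/3 + ε/3 := by linarith
      _ < ε := by linarith
  -- Picard-Lindelöf for each n
  have hpl : ∀ n : ℕ, ∃ φ : ℝ → ℝ, φ t0 = y0 ∧
      ∀ t ∈ I, HasDerivWithinAt φ (mcs g n t (φ t)) I t := by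
    intro n
    have hip : IsPicardLindelof (fun t y => mcs g n t y) (tmin := t0) (tmax := t0 + a)
        ⟨t0, le_refl _, haa⟩ y0 ⟨M * a, by positivity⟩ 0 ⟨M, hM⟩ n := by
      constructor
      · intro t _
        apply LipschitzWith.lipschitzOnWith
        apply LipschitzWith.of_dist_le_mul
        intro y y'
        rw [Real.dist_eq, Real.dist_eq]
        have := abs_mcs_sub_le hgb n t y y'
        simpa using this
      · intro x _
        exact ((hgnc n).comp (continuous_id.prodMk continuous_const)).continuousOn
      · intro t _ x _
        rw [Real.norm_eq_abs]
        exact abs_mcs_le hgb n t x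
      · show M * max (t0 + a - t0) (t0 - t0) ≤ M * a - 0
        have : max (t0 + a - t0) (t0 - t0) = a := by
          rw [max_eq_left (by linarith)]; ring
        rw [this, sub_zero]
    exact hip.exists_eq_forall_mem_Icc_hasDerivWithinAt₀
  choose φ hφ0 hφd using hpl
  -- equi-Lipschitz bound
  have hφlip : ∀ n : ℕ, ∀ t ∈ I, ∀ s ∈ I, |φ n t - φ n s| ≤ M * |t - s| := by
    intro n t ht s hs
    have := (convex_Icc t0 (t0+a)).norm_image_sub_le_of_norm_hasDerivWithin_le
      (f := φ n) (f' := fun u => mcs g n u (φ n u))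
      (fun u hu => hφd n u hu)
      (fun u _ => by rw [Real.norm_eq_abs]; exact abs_mcs_le hgb n u _) hs ht
    simpa [Real.norm_eq_abs] using this
  -- monotone in n
  have hstep : ∀ n : ℕ, ∀ t ∈ I, φ n t ≤ φ (n+1) t := by
    intro n
    set c : ℝ := -((n:ℝ)+1) with hc
    set E : ℝ → ℝ := fun t => Real.exp (c * t) with hE
    have hEd : ∀ t : ℝ, HasDerivAt E (E t * c) t := by
      intro t
      have h1 : HasDerivAt (fun t : ℝ => c * t) c t := by
        simpa using (hasDerivAt_id t).const_mul c
      simpa [hE, mul_comm] using h1.exp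
    have hEpos : ∀ t, 0 < E t := fun t => Real.exp_pos _
    intro t ht
    have key := aux_comp (t0 := t0) (T := t0 + a)
      (h := fun s => (φ n s - φ (n+1) s) * E s)
      (h' := fun s => (mcs g n s (φ n s) - mcs g (n+1) s (φ (n+1) s)) * E s
        + (φ n s - φ (n+1) s) * (E s * c))
      (fun s hs => ((hφd n s hs).sub (hφd (n+1) s hs)).mul (hEd s).hasDerivWithinAt)
      (by simp [hφ0])
      ?_ t ht
    · have hE' := hEpos t
      have key' : (φ n t - φ (n+1) t) * E t ≤ 0 * E t := by simpa using key
      have := le_of_mul_le_mul_right key' hE'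
      linarith
    · intro s hs hpos
      have hE' := hEpos s
      have hpos' : 0 * E s ≤ (φ n s - φ (n+1) s) * E s := by simpa using hpos
      have hd0 : 0 ≤ φ n s - φ (n+1) s := le_of_mul_le_mul_right hpos' hE'
      have hd : φ (n+1) s ≤ φ n s := by linarith
      have h1 : mcs g n s (φ n s) ≤ mcs g (n+1) s (φ n s) :=
        mcs_mono hgb (Nat.le_succ n) _ _
      have h2 : mcs g (n+1) s (φ n s) - mcs g (n+1) s (φ (n+1) s)
          ≤ ((n:ℝ)+1) * (φ n s - φ (n+1) s) := by
        have h3 := (abs_le.1 (abs_mcs_sub_le hgb (n+1) s (φ n s) (φ (n+1) s))).2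
        have h4 : |φ n s - φ (n+1) s| = φ n s - φ (n+1) s := abs_of_nonneg (by linarith)
        rw [h4] at h3
        push_cast at h3
        linarith
      have h5 : mcs g n s (φ n s) - mcs g (n+1) s (φ (n+1) s)
          ≤ ((n:ℝ)+1) * (φ n s - φ (n+1) s) := by linarith
      show (mcs g n s (φ n s) - mcs g (n+1) s (φ (n+1) s)) * E s
        + (φ n s - φ (n+1) s) * (E s * c) ≤ 0
      rw [hc]
      nlinarith [mul_le_mul_of_nonneg_right h5 hE'.le]
  have hmon : ∀ t ∈ I, Monotone fun n : ℕ => φ n t :=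
    fun t ht => monotone_nat_of_le_succ (fun n => hstep n t ht)
  have ht0I : t0 ∈ I := ⟨le_rfl, haa⟩
  have hbdd : ∀ t ∈ I, BddAbove (range fun n : ℕ => φ n t) := by
    intro t ht
    refine ⟨y0 + M * a, ?_⟩
    rintro x ⟨n, rfl⟩
    have h1 := (abs_le.1 (hφlip n t ht t0 ht0I)).2
    rw [hφ0] at h1
    have h2 : |t - t0| ≤ a := by
      rw [abs_of_nonneg (by linarith [ht.1])]
      linarith [ht.2]
    nlinarith
  set Φ : ℝ → ℝ := fun t => ⨆ n : ℕ, φ n t with hΦdef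
  have htend : ∀ t ∈ I, Tendsto (fun n : ℕ => φ n t) atTop (𝓝 (Φ t)) :=
    fun t ht => tendsto_atTop_ciSup (hmon t ht) (hbdd t ht)
  have hΦ0 : Φ t0 = y0 := by
    refine tendsto_nhds_unique (htend t0 ht0I) ?_
    simpa [hφ0] using (tendsto_const_nhds : Tendsto (fun _ : ℕ => y0) atTop (𝓝 y0))
  have hΦlip : ∀ t ∈ I, ∀ s ∈ I, |Φ t - Φ s| ≤ M * |t - s| := by
    intro t ht s hs
    exact le_of_tendsto (((htend t ht).sub (htend s hs)).abs)
      (Filter.Eventually.of_forall fun n => hφlip n t ht s hs)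
  have hΦc : ContinuousOn Φ I := by
    refine LipschitzOnWith.continuousOn (K := M.toNNReal) ?_
    refine LipschitzOnWith.of_dist_le_mul fun x hx y hy => ?_
    rw [Real.dist_eq, Real.dist_eq, Real.coe_toNNReal M hM]
    exact hΦlip x hx y hy
  -- continuity of integrands
  have hφcont : ∀ n : ℕ, ContinuousOn (φ n) I :=
    fun n s hs => (hφd n s hs).continuousWithinAt
  have hIcont : ∀ n : ℕ, ContinuousOn (fun s => mcs g n s (φ n s)) I := by
    intro n
    exact (hgnc n).comp_continuousOn (continuousOn_id.prodMk (hφcont n))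
  -- convergence of integrands
  have hkey : ∀ t ∈ I, Tendsto (fun n : ℕ => mcs g n t (φ n t)) atTop (𝓝 (g t (Φ t))) := by
    intro t ht
    rw [Metric.tendsto_atTop]
    intro ε hε
    obtain ⟨δ, hδ, hδ'⟩ := hUCy (ε/3) (by linarith)
    obtain ⟨N1, hN1⟩ := exists_nat_ge (2 * M / δ)
    obtain ⟨N2, hN2⟩ := Metric.tendsto_atTop.1 (htend t ht) δ hδ
    refine ⟨max N1 N2, fun n hn => ?_⟩
    have hnN1 : N1 ≤ n := le_trans (le_max_left _ _) hn
    have hnN2 : N2 ≤ n := le_trans (le_max_right _ _) hn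
    have hna : 2 * M ≤ (n:ℝ) * δ := by
      have h1 : (N1:ℝ) ≤ (n:ℝ) := by exact_mod_cast hnN1
      have := (div_le_iff₀ hδ).1 (hN1.trans h1)
      linarith
    have e1 : |mcs g n t (φ n t) - g t (φ n t)| ≤ ε/3 := by
      rw [abs_sub_comm, abs_le]
      constructor
      · have := mcs_le_self hgb n t (φ n t); linarith
      · have := mcs_ge hgb (n := n) (t := t) (y := φ n t) (by linarith : (0:ℝ) ≤ ε/3) hδ
          (fun z hz => hδ' t (φ n t) z hz) hna
        linarith
    have e2 : |g t (φ n t) - g t (Φ t)| ≤ ε/3 := by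
      refine hδ' t (φ n t) (Φ t) ?_
      have := hN2 n hnN2
      rw [Real.dist_eq] at this
      exact this.le
    rw [Real.dist_eq]
    calc |mcs g n t (φ n t) - g t (Φ t)|
        ≤ |mcs g n t (φ n t) - g t (φ n t)| + |g t (φ n t) - g t (Φ t)| := abs_sub_le _ _ _
      _ ≤ ε/3 + ε/3 := by linarith
      _ < ε := by linarith
  -- integral equation for each n
  have hInt : ∀ n : ℕ, ∀ t ∈ I, φ n t = y0 + ∫ s in t0..t, mcs g n s (φ n s) := by
    intro n t ht
    have hsub : Icc t0 t ⊆ I := Icc_subset_Icc le_rfl ht.2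
    have heq := intervalIntegral.integral_eq_sub_of_hasDeriv_right_of_le ht.1
      (f := φ n) (f' := fun s => mcs g n s (φ n s))
      ((hφcont n).mono hsub)
      (fun x hx => (hφd n x (hsub ⟨hx.1.le, hx.2.le⟩)).mono_of_mem_nhdsWithin
        (Icc_mem_nhdsGT_of_mem ⟨hx.1.le, hx.2.trans_le ht.2⟩))
      (((hIcont n).mono (by rw [uIcc_of_le ht.1]; exact hsub)).intervalIntegrable)
    rw [hφ0] at heq
    rw [heq]
    ring
  -- pass to the limit
  have hΦeq : ∀ t ∈ I, Φ t = y0 + ∫ s in t0..t, g s (Φ s) := by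
    intro t ht
    have hsub : Icc t0 t ⊆ I := Icc_subset_Icc le_rfl ht.2
    have huIoc : uIoc t0 t ⊆ I := by
      rw [uIoc_of_le ht.1]; exact Ioc_subset_Icc_self.trans hsub
    have hDCT := intervalIntegral.tendsto_integral_filter_of_dominated_convergence
      (μ := volume) (a := t0) (b := t) (F := fun (n : ℕ) s => mcs g n s (φ n s))
      (f := fun s => g s (Φ s)) (fun _ => M)
      (Filter.Eventually.of_forall fun n =>
        ((hIcont n).mono huIoc).aestronglyMeasurable measurableSet_uIoc)
      (Filter.Eventually.of_forall fun n => ae_of_all _ fun s _ => by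
        rw [Real.norm_eq_abs]; exact abs_mcs_le hgb n s _)
      intervalIntegrable_const
      (ae_of_all _ fun s hs => hkey s (huIoc hs))
    have h2 : Tendsto (fun n : ℕ => φ n t) atTop (𝓝 (y0 + ∫ s in t0..t, g s (Φ s))) :=
      Filter.Tendsto.congr (fun n => (hInt n t ht).symm) (tendsto_const_nhds.add hDCT)
    exact tendsto_nhds_unique (htend t ht) h2
  -- conclude via FTC-1 with a globally continuous integrand
  have hgcont : Continuous fun p : ℝ × ℝ => g p.1 p.2 := by
    rw [Metric.continuous_iff]
    intro b ε hε
    obtain ⟨δ, hδ, hδ'⟩ := hUC (ε/2) (by linarith)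
    refine ⟨δ, hδ, fun p hp => ?_⟩
    have h1 : dist p.1 b.1 ≤ δ := le_trans (le_max_left _ _) (by rw [← Prod.dist_eq]; exact hp.le)
    have h2 : dist p.2 b.2 ≤ δ := le_trans (le_max_right _ _) (by rw [← Prod.dist_eq]; exact hp.le)
    rw [Real.dist_eq] at h1 h2 ⊢
    exact lt_of_le_of_lt (hδ' _ _ _ _ h1 h2) (by linarith)
  set π : ℝ → ℝ := fun s => max t0 (min s (t0 + a)) with hπdef
  have hπmem : ∀ s, π s ∈ I := fun s => ⟨le_max_left _ _, max_le haa (min_le_right _ _)⟩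
  have hπcont : Continuous π := continuous_const.max (continuous_id.min continuous_const)
  have hπeq : ∀ s ∈ I, π s = s := fun s hs => by
    show max t0 (min s (t0 + a)) = s
    rw [min_eq_left hs.2, max_eq_right hs.1]
  set H : ℝ → ℝ := fun s => g s (Φ (π s)) with hHdef
  have hHc : Continuous H :=
    hgcont.comp (continuous_id.prodMk (hΦc.comp_continuous hπcont hπmem))
  have hHeq : ∀ s ∈ I, H s = g s (Φ s) := fun s hs => by
    show g s (Φ (π s)) = g s (Φ s)
    rw [hπeq s hs]
  have hEqOn : ∀ s ∈ I, Φ s = y0 + ∫ u in t0..s, H u := by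
    intro s hs
    rw [hΦeq s hs]
    congr 1
    refine intervalIntegral.integral_congr fun u hu => ?_
    have huI : u ∈ I := by
      rw [uIcc_of_le hs.1] at hu
      exact Icc_subset_Icc le_rfl hs.2 hu
    exact (hHeq u huI).symm
  refine ⟨Φ, hΦ0, fun t ht => ?_⟩
  have hd : HasDerivAt (fun u => y0 + ∫ s in t0..u, H s) (H t) t := by
    have h1 : HasDerivAt (fun u => ∫ s in t0..u, H s) (H t) t :=
      intervalIntegral.integral_hasDerivAt_right (hHc.intervalIntegrable t0 t)
        (hHc.stronglyMeasurableAtFilter _ _) hHc.continuousAt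
    simpa using h1.const_add y0
  have := hd.hasDerivWithinAt.congr (s := I) hEqOn (hEqOn t ht)
  rw [hHeq t ht] at this
  exact this

/-- Third version of Peano's Theorem: if the nonlocal problem `y' = f(t,y)`,
`y t0 = y0` on `I = [t0, t0+a]` (with `f : I × ℝ → ℝ` continuous) has a lower
solution `α` and an upper solution `β` with `α ≤ β` on `I`, then it has a
solution `φ` with `α ≤ φ ≤ β` on `I`. Lower/upper solutions are continuously
differentiable, with derivative functions `α'`, `β'`. -/
theorem peano_lower_upper (t0 y0 a : ℝ) (ha : 0 < a)
    (f : ℝ → ℝ → ℝ)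
    (hf : ContinuousOn (fun p : ℝ × ℝ => f p.1 p.2)
      (Icc t0 (t0 + a) ×ˢ (univ : Set ℝ)))
    (α β α' β' : ℝ → ℝ)
    (hαd : ∀ t ∈ Icc t0 (t0 + a), HasDerivWithinAt α (α' t) (Icc t0 (t0 + a)) t)
    (hαc : ContinuousOn α' (Icc t0 (t0 + a)))
    (hα0 : α t0 ≤ y0)
    (hαf : ∀ t ∈ Icc t0 (t0 + a), α' t ≤ f t (α t))
    (hβd : ∀ t ∈ Icc t0 (t0 + a), HasDerivWithinAt β (β' t) (Icc t0 (t0 + a)) t)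
    (hβc : ContinuousOn β' (Icc t0 (t0 + a)))
    (hβ0 : y0 ≤ β t0)
    (hβf : ∀ t ∈ Icc t0 (t0 + a), f t (β t) ≤ β' t)
    (hαβ : ∀ t ∈ Icc t0 (t0 + a), α t ≤ β t) :
    ∃ φ : ℝ → ℝ, φ t0 = y0 ∧
      ∀ t ∈ Icc t0 (t0 + a),
        HasDerivWithinAt φ (f t (φ t)) (Icc t0 (t0 + a)) t ∧
        α t ≤ φ t ∧ φ t ≤ β t := by
  have haa : t0 ≤ t0 + a := by linarith
  have hαcont : ContinuousOn α (Icc t0 (t0 + a)) := fun t ht => (hαd t ht).continuousWithinAt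
  have hβcont : ContinuousOn β (Icc t0 (t0 + a)) := fun t ht => (hβd t ht).continuousWithinAt
  -- projection onto the interval
  set π : ℝ → ℝ := fun s => max t0 (min s (t0 + a)) with hπdef
  have hπmem : ∀ s, π s ∈ Icc t0 (t0 + a) :=
    fun s => ⟨le_max_left _ _, max_le haa (min_le_right _ _)⟩
  have hπeq : ∀ s ∈ Icc t0 (t0 + a), π s = s := fun s hs => by
    show max t0 (min s (t0 + a)) = s
    rw [min_eq_left hs.2, max_eq_right hs.1]
  have hπlip : ∀ s s' : ℝ, |π s - π s'| ≤ |s - s'| := by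
    intro s s'
    refine le_trans (abs_max_sub_max_le_max _ _ _ _) ?_
    rw [sub_self, abs_zero]
    refine max_le (by positivity) ?_
    refine le_trans (abs_min_sub_min_le_max _ _ _ _) ?_
    rw [sub_self, abs_zero]
    exact max_le le_rfl (abs_nonneg _)
  -- clamp function
  set c : ℝ → ℝ → ℝ := fun t y => max (α (π t)) (min y (β (π t))) with hcdef
  have hcle : ∀ t y, α (π t) ≤ c t y ∧ c t y ≤ β (π t) := by
    intro t y
    constructor
    · exact le_max_left _ _
    · exact max_le (hαβ _ (hπmem t)) (min_le_right _ _)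
  -- bounds for α, β on the interval
  obtain ⟨C1, hC1⟩ := isCompact_Icc.exists_bound_of_continuousOn hαcont
  obtain ⟨C2, hC2⟩ := isCompact_Icc.exists_bound_of_continuousOn hβcont
  set R0 : ℝ := max C1 C2 with hR0def
  have hcR0 : ∀ t y, c t y ∈ Icc (-R0) R0 := by
    intro t y
    have h1 := hC1 (π t) (hπmem t)
    have h2 := hC2 (π t) (hπmem t)
    rw [Real.norm_eq_abs] at h1 h2
    constructor
    · refine le_trans ?_ (hcle t y).1
      have := (abs_le.1 (h1.trans (le_max_left C1 C2))).1
      exact this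
    · refine le_trans (hcle t y).2 ?_
      exact (abs_le.1 (h2.trans (le_max_right C1 C2))).2
  -- compact set and bound for f
  set K : Set (ℝ × ℝ) := Icc t0 (t0 + a) ×ˢ Icc (-R0) R0 with hKdef
  have hKcomp : IsCompact K := isCompact_Icc.prod isCompact_Icc
  have hfK : ContinuousOn (fun p : ℝ × ℝ => f p.1 p.2) K :=
    hf.mono (prod_mono subset_rfl (subset_univ _))
  obtain ⟨M0, hM0⟩ := hKcomp.exists_bound_of_continuousOn hfK
  set M : ℝ := max M0 0 with hMdef
  set g : ℝ → ℝ → ℝ := fun t y => f (π t) (c t y) with hgdef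
  have hmemK : ∀ t y, ((π t, c t y) : ℝ × ℝ) ∈ K := fun t y => ⟨hπmem t, hcR0 t y⟩
  have hgb : ∀ t y, |g t y| ≤ M := by
    intro t y
    have := hM0 _ (hmemK t y)
    rw [Real.norm_eq_abs] at this
    exact this.trans (le_max_left _ _)
  -- uniform continuity of g
  have hfUC := Metric.uniformContinuousOn_iff_le.1
    (hKcomp.uniformContinuousOn_of_continuous hfK)
  have hαUC := Metric.uniformContinuousOn_iff_le.1
    (isCompact_Icc.uniformContinuousOn_of_continuous hαcont)
  have hβUC := Metric.uniformContinuousOn_iff_le.1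
    (isCompact_Icc.uniformContinuousOn_of_continuous hβcont)
  have hUC : ∀ ε > 0, ∃ δ > 0, ∀ t t' y y', |t - t'| ≤ δ → |y - y'| ≤ δ →
      |g t y - g t' y'| ≤ ε := by
    intro ε hε
    obtain ⟨δ2, hδ2, hδ2'⟩ := hfUC ε hε
    obtain ⟨δ3, hδ3, hδ3'⟩ := hαUC δ2 hδ2
    obtain ⟨δ4, hδ4, hδ4'⟩ := hβUC δ2 hδ2
    refine ⟨min δ2 (min δ3 δ4), by positivity, fun t t' y y' hty hyy => ?_⟩
    have hππ : |π t - π t'| ≤ min δ2 (min δ3 δ4) := (hπlip t t').trans hty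
    have hαα : |α (π t) - α (π t')| ≤ δ2 := by
      have := hδ3' (π t) (hπmem t) (π t') (hπmem t')
        (by rw [Real.dist_eq]; exact hππ.trans ((min_le_right _ _).trans (min_le_left _ _)))
      rwa [Real.dist_eq] at this
    have hββ : |β (π t) - β (π t')| ≤ δ2 := by
      have := hδ4' (π t) (hπmem t) (π t') (hπmem t')
        (by rw [Real.dist_eq]; exact hππ.trans ((min_le_right _ _).trans (min_le_right _ _)))
      rwa [Real.dist_eq] at this
    have hcc : |c t y - c t' y'| ≤ δ2 := by
      refine le_trans (abs_max_sub_max_le_max _ _ _ _) ?_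
      refine max_le hαα ?_
      refine le_trans (abs_min_sub_min_le_max _ _ _ _) ?_
      exact max_le (hyy.trans (min_le_left _ _)) hββ
    have hdist : dist ((π t, c t y) : ℝ × ℝ) ((π t', c t' y') : ℝ × ℝ) ≤ δ2 := by
      rw [Prod.dist_eq]
      refine max_le ?_ ?_
      · rw [Real.dist_eq]; exact hππ.trans (min_le_left _ _)
      · rw [Real.dist_eq]; exact hcc
    have := hδ2' _ (hmemK t y) _ (hmemK t' y') hdist
    rwa [Real.dist_eq] at this
  -- solve the modified problem
  obtain ⟨Φ, hΦ0, hΦd⟩ := peano_aux t0 y0 a M ha (le_max_right _ _) g hgb hUC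
  -- Φ ≤ β
  have hβΦ : ∀ t ∈ Icc t0 (t0 + a), Φ t ≤ β t := by
    have := aux_comp (t0 := t0) (T := t0 + a)
      (h := fun t => Φ t - β t) (h' := fun t => g t (Φ t) - β' t)
      (fun t ht => (hΦd t ht).sub (hβd t ht))
      (by show Φ t0 - β t0 ≤ 0; rw [hΦ0]; linarith)
      ?_
    · intro t ht
      have h := this t ht
      have h' : Φ t - β t ≤ 0 := h
      linarith
    · intro t ht hpos
      have hpos' : 0 ≤ Φ t - β t := hpos
      have h1 : β t ≤ Φ t := by linarith
      have h2 : g t (Φ t) = f t (β t) := by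
        show f (π t) (c t (Φ t)) = f t (β t)
        rw [hπeq t ht]
        show f t (max (α (π t)) (min (Φ t) (β (π t)))) = f t (β t)
        rw [hπeq t ht, min_eq_right h1, max_eq_right (hαβ t ht)]
      show g t (Φ t) - β' t ≤ 0
      rw [h2]
      have := hβf t ht
      linarith
  -- α ≤ Φ
  have hαΦ : ∀ t ∈ Icc t0 (t0 + a), α t ≤ Φ t := by
    have := aux_comp (t0 := t0) (T := t0 + a)
      (h := fun t => α t - Φ t) (h' := fun t => α' t - g t (Φ t))
      (fun t ht => (hαd t ht).sub (hΦd t ht))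
      (by show α t0 - Φ t0 ≤ 0; rw [hΦ0]; linarith)
      ?_
    · intro t ht
      have h := this t ht
      have h' : α t - Φ t ≤ 0 := h
      linarith
    · intro t ht hpos
      have hpos' : 0 ≤ α t - Φ t := hpos
      have h1 : Φ t ≤ α t := by linarith
      have h2 : g t (Φ t) = f t (α t) := by
        show f (π t) (c t (Φ t)) = f t (α t)
        rw [hπeq t ht]
        show f t (max (α (π t)) (min (Φ t) (β (π t)))) = f t (α t)
        rw [hπeq t ht, min_eq_left (h1.trans (hαβ t ht)), max_eq_left h1]
      show α' t - g t (Φ t) ≤ 0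
      rw [h2]
      have := hαf t ht
      linarith
  refine ⟨Φ, hΦ0, fun t ht => ⟨?_, hαΦ t ht, hβΦ t ht⟩⟩
  have h2 : g t (Φ t) = f t (Φ t) := by
    show f (π t) (c t (Φ t)) = f t (Φ t)
    rw [hπeq t ht]
    show f t (max (α (π t)) (min (Φ t) (β (π t)))) = f t (Φ t)
    rw [hπeq t ht, min_eq_left (hβΦ t ht), max_eq_right (hαΦ t ht)]
  have := hΦd t ht
  rwa [h2] at this
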